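/- Let Z : 𝕂 × 𝕂 → A_X be a cotranslation such that for every r ∈ 𝕂 the map t ↦ Z(r, t) is differentiable. Then for every t, the map r ↦ Z(r, t) is differentiable and ∂₁Z(r, t) = ∂₂Z(r, t) − Z(r, t) ∘ ∂₂Z(r, 0). -/

import Mathlib

/-- If a cotranslation `Z` is differentiable in the second argument (with derivative
`D r t`), then it is differentiable in the first argument and
`∂₁Z(r,t) = ∂₂Z(r,t) − Z(r,t) ∘ ∂₂Z(r,0)`. -/
theorem stmt_11 {𝕂 X : Type*} [RCLike 𝕂] [NormedAddCommGroup X] [NormedSpace 𝕂 X]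
    (Z : 𝕂 → 𝕂 → (X ≃L[𝕂] X))
    (hZ : ∀ r s t : 𝕂, Z r (t + s) = Z (s + r) t * Z r s)
    (D : 𝕂 → 𝕂 → (X →L[𝕂] X))
    (hD : ∀ r t : 𝕂, HasDerivAt (fun s => ((Z r s : X →L[𝕂] X))) (D r t) t) :
    ∀ r t : 𝕂, HasDerivAt (fun u => ((Z u t : X →L[𝕂] X)))
      (D r t - ((Z r t : X →L[𝕂] X)).comp (D r 0)) r := by
  -- general fact: symm * e = 1 and e * symm = 1 as CLMs
  have symm_mul : ∀ (e : X ≃L[𝕂] X),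
      ((e.symm : X →L[𝕂] X)) * (e : X →L[𝕂] X) = 1 := by
    intro e; ext x; simp [ContinuousLinearMap.mul_apply]
  intro r t
  -- Z r 0 = 1
  have hZ0 : Z r 0 = 1 := by
    have h := hZ r 0 0
    simp only [add_zero, zero_add] at h
    have := mul_left_cancel (a := Z r 0) (b := (1 : X ≃L[𝕂] X)) (c := Z r 0)
      (by rw [mul_one]; exact h)
    exact this.symm
  set h : 𝕂 → (X →L[𝕂] X) := fun u => ((Z r (u - r) : X →L[𝕂] X)) with hh_def
  set g : 𝕂 → (X →L[𝕂] X) := fun u => (((Z r (u - r)).symm : X →L[𝕂] X)) with hg_def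
  set k : 𝕂 → (X →L[𝕂] X) := fun u => ((Z r (t + (u - r)) : X →L[𝕂] X)) with hk_def
  have mul_symm : ∀ (e : X ≃L[𝕂] X),
      ((e : X →L[𝕂] X)) * (e.symm : X →L[𝕂] X) = 1 := by
    intro e; ext x; simp [ContinuousLinearMap.mul_apply]
  have hr : h r = 1 := by simp only [hh_def, sub_self, hZ0]; rfl
  have gr : g r = 1 := by simp only [hg_def, sub_self, hZ0]; rfl
  have kr : k r = (Z r t : X →L[𝕂] X) := by simp [hk_def]
  have gh : ∀ u, g u * h u = 1 := fun u => symm_mul _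
  -- derivative of h at r is D r 0
  have hinner : HasDerivAt (fun u : 𝕂 => u - r) 1 r := by
    simpa using (hasDerivAt_id r).sub_const r
  have Hh : HasDerivAt h (D r 0) r := by
    have := HasDerivAt.scomp (𝕜 := 𝕂) r (by simpa using hD r 0) hinner
    simpa [hh_def, Function.comp_def] using this
  -- derivative of k at r is D r t
  have hinner2 : HasDerivAt (fun u : 𝕂 => t + (u - r)) 1 r := by
    simpa using ((hasDerivAt_id r).sub_const r).const_add t
  have Hk : HasDerivAt k (D r t) r := by
    have := HasDerivAt.scomp (𝕜 := 𝕂) r (by simpa using hD r t) hinner2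
    simpa [hk_def, Function.comp_def] using this
  -- key algebraic identity : g u - 1 = -(g u * (h u - 1))
  have gkey : ∀ u, g u - 1 = -(g u * (h u - 1)) := by
    intro u
    have := gh u
    rw [mul_sub, this, mul_one]
    abel
  -- bound on ‖g u‖ near r
  have hcont : ContinuousAt h r := Hh.continuousAt
  have hbound : ∀ᶠ u in nhds r, ‖g u‖ ≤ 2 := by
    have : ∀ᶠ u in nhds r, ‖h u - 1‖ ≤ 1/2 := by
      have := hcont.tendsto
      rw [hr] at this
      have h2 := this (Metric.closedBall_mem_nhds (1 : X →L[𝕂] X) (by norm_num : (0:ℝ) < 1/2))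
      filter_upwards [h2] with u hu
      simpa [dist_eq_norm] using hu
    filter_upwards [this] with u hu
    have key := gkey u
    have : ‖g u‖ ≤ ‖(1 : X →L[𝕂] X)‖ + ‖g u‖ * ‖h u - 1‖ := by
      calc ‖g u‖ = ‖(1 : X →L[𝕂] X) + (g u - 1)‖ := by
            congr 1; abel
        _ ≤ ‖(1 : X →L[𝕂] X)‖ + ‖g u - 1‖ := norm_add_le _ _
        _ ≤ ‖(1 : X →L[𝕂] X)‖ + ‖g u‖ * ‖h u - 1‖ := by
            rw [key, norm_neg]
            exact add_le_add le_rfl (norm_mul_le _ _)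
    have hone : ‖(1 : X →L[𝕂] X)‖ ≤ 1 := ContinuousLinearMap.norm_id_le
    nlinarith [norm_nonneg (g u)]
  -- continuity of g at r
  have gcont : Filter.Tendsto g (nhds r) (nhds 1) := by
    rw [tendsto_iff_norm_sub_tendsto_zero]
    have hnorm : Filter.Tendsto (fun u => ‖h u - 1‖) (nhds r) (nhds 0) := by
      have : Filter.Tendsto (fun u => h u - 1) (nhds r) (nhds 0) := by
        have := hcont.tendsto
        rw [hr] at this
        simpa using this.sub_const 1
      simpa using this.norm
    have hb : Filter.Tendsto (fun u => (2:ℝ) * ‖h u - 1‖) (nhds r) (nhds 0) := by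
      simpa using hnorm.const_mul 2
    refine squeeze_zero' (Filter.Eventually.of_forall fun u => norm_nonneg _) ?_ hb
    filter_upwards [hbound] with u hu
    calc ‖g u - 1‖ = ‖g u * (h u - 1)‖ := by rw [gkey u, norm_neg]
      _ ≤ ‖g u‖ * ‖h u - 1‖ := norm_mul_le _ _
      _ ≤ 2 * ‖h u - 1‖ := by
          exact mul_le_mul_of_nonneg_right hu (norm_nonneg _)
  -- derivative of g at r
  have Hg : HasDerivAt g (-(D r 0)) r := by
    rw [hasDerivAt_iff_tendsto_slope]
    have hslope : Filter.Tendsto (slope h r) (nhdsWithin r {r}ᶜ) (nhds (D r 0)) :=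
      hasDerivAt_iff_tendsto_slope.1 Hh
    have heq : ∀ u, slope g r u = -(g u * slope h r u) := by
      intro u
      simp only [slope_def_module, gr, hr]
      rw [gkey u, smul_neg, mul_smul_comm]
    rw [show (-(D r 0)) = -((1 : X →L[𝕂] X) * D r 0) by simp]
    have := ((gcont.mono_left nhdsWithin_le_nhds).mul hslope).neg
    refine this.congr fun u => (heq u).symm
  -- the product identity : (Z u t : CLM) = k u * g u
  have prod_eq : ∀ u : 𝕂, ((Z u t : X →L[𝕂] X)) = k u * g u := by
    intro u
    have hc := hZ r (u - r) t
    rw [sub_add_cancel] at hc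
    have hc' : k u = (Z u t : X →L[𝕂] X) * h u := by
      simp only [hk_def, hh_def, hc]
      rfl
    calc ((Z u t : X →L[𝕂] X)) = (Z u t : X →L[𝕂] X) * 1 := by rw [mul_one]
      _ = (Z u t : X →L[𝕂] X) * (h u * g u) := by
            rw [show h u * g u = 1 from mul_symm (Z r (u - r))]
      _ = k u * g u := by rw [← mul_assoc, ← hc']
  have final := Hk.mul Hg
  rw [gr, kr, mul_one] at final
  have : HasDerivAt (fun u => ((Z u t : X →L[𝕂] X)))
      (D r t + (Z r t : X →L[𝕂] X) * -(D r 0)) r := by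
    refine final.congr_of_eventuallyEq ?_
    filter_upwards with u
    exact prod_eq u
  convert this using 1
  simp [mul_neg, sub_eq_add_neg]
  rfl
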